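/- arXiv:2312.16478 — 4 statements merged into one kernel-verified Lean document; each statement's English description precedes it below -/
import Mathlib

section
/- (Instance-level form of Theorem 1, uniform complementary labels.) Let K ≥ 2 and let q lie in the probability simplex Δ over {1,…,K} with q_k < 1 for all k, and set q̄_k = (1 − q_k)/(K − 1). Then for every p ∈ Δ with p_k < 1 for all k, the complementary risk satisfies L_{q̄}(p) = −Σ_k q̄_k log(1 − p_k) ≥ L_{q̄}(q), with equality if and only if p = q. Hence the true posterior q is the unique minimizer of the complementary risk built only from complementary labels. -/
open Real

/-- Gibbs-type inequality: if `a, b > 0` pointwise and have equal sums, then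
`∑ a_k log b_k ≤ ∑ a_k log a_k`, strictly unless `b = a`. -/
theorem gibbs_aux {K : ℕ} (a b : Fin K → ℝ) (ha : ∀ k, 0 < a k) (hb : ∀ k, 0 < b k)
    (hsum : ∑ k, b k = ∑ k, a k) :
    (∑ k, a k * Real.log (b k) ≤ ∑ k, a k * Real.log (a k)) ∧
      ((∑ k, a k * Real.log (b k) = ∑ k, a k * Real.log (a k)) ↔ b = a) := by
  have key : ∀ k, a k * Real.log (b k) ≤ a k * Real.log (a k) + (b k - a k) := by
    intro k
    have h1 : Real.log (b k / a k) ≤ b k / a k - 1 :=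
      Real.log_le_sub_one_of_pos (div_pos (hb k) (ha k))
    have h2 : Real.log (b k / a k) = Real.log (b k) - Real.log (a k) :=
      Real.log_div (ne_of_gt (hb k)) (ne_of_gt (ha k))
    have h3 := mul_le_mul_of_nonneg_left h1 (le_of_lt (ha k))
    have h4 : a k * (b k / a k - 1) = b k - a k := by
      rw [mul_sub, mul_one, mul_div_cancel₀ _ (ne_of_gt (ha k))]
    rw [h2, h4] at h3
    linarith
  have keystrict : ∀ k, b k ≠ a k →
      a k * Real.log (b k) < a k * Real.log (a k) + (b k - a k) := by
    intro k hne
    have hne1 : b k / a k ≠ 1 := by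
      intro h
      exact hne ((div_eq_one_iff_eq (ne_of_gt (ha k))).mp h)
    have h1 : Real.log (b k / a k) < b k / a k - 1 :=
      Real.log_lt_sub_one_of_pos (div_pos (hb k) (ha k)) hne1
    have h2 : Real.log (b k / a k) = Real.log (b k) - Real.log (a k) :=
      Real.log_div (ne_of_gt (hb k)) (ne_of_gt (ha k))
    have h3 := (mul_lt_mul_iff_right₀ (ha k)).2 h1
    have h4 : a k * (b k / a k - 1) = b k - a k := by
      rw [mul_sub, mul_one, mul_div_cancel₀ _ (ne_of_gt (ha k))]
    rw [h2, h4] at h3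
    linarith
  have hsum_rhs : ∑ k, (a k * Real.log (a k) + (b k - a k)) = ∑ k, a k * Real.log (a k) := by
    rw [Finset.sum_add_distrib, Finset.sum_sub_distrib, hsum]
    ring
  have hle : ∑ k, a k * Real.log (b k) ≤ ∑ k, a k * Real.log (a k) := by
    calc ∑ k, a k * Real.log (b k) ≤ ∑ k, (a k * Real.log (a k) + (b k - a k)) :=
          Finset.sum_le_sum fun k _ => key k
      _ = _ := hsum_rhs
  refine ⟨hle, ?_, ?_⟩
  · intro heq
    by_contra hne
    have : ∃ j, b j ≠ a j := by
      by_contra h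
      push_neg at h
      exact hne (funext h)
    obtain ⟨j, hj⟩ := this
    have hlt : ∑ k, a k * Real.log (b k) < ∑ k, (a k * Real.log (a k) + (b k - a k)) :=
      Finset.sum_lt_sum (fun k _ => key k) ⟨j, Finset.mem_univ j, keystrict j hj⟩
    rw [hsum_rhs] at hlt
    linarith
  · intro h; rw [h]

/-- instance-level Theorem 1, uniform complementary labels: for `q` in the
simplex with `q_k < 1` for all `k` and `q̄_k = (1 - q_k)/(K - 1)`, every prediction `p` in
the simplex with `p_k < 1` for all `k` satisfies
`L_{q̄}(p) = -∑ q̄_k log(1 - p_k) ≥ L_{q̄}(q)`, with equality iff `p = q`. -/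
theorem complementary_risk_minimized_at_truth {K : ℕ} (hK : 2 ≤ K)
    (q : Fin K → ℝ)
    (hq0 : ∀ k, 0 ≤ q k) (hq1 : ∑ k, q k = 1) (hqlt : ∀ k, q k < 1) :
    ∀ p : Fin K → ℝ, (∀ k, 0 ≤ p k) → ∑ k, p k = 1 → (∀ k, p k < 1) →
      (-∑ k, ((1 - q k) / ((K : ℝ) - 1)) * Real.log (1 - p k) ≥
        -∑ k, ((1 - q k) / ((K : ℝ) - 1)) * Real.log (1 - q k)) ∧
      ((-∑ k, ((1 - q k) / ((K : ℝ) - 1)) * Real.log (1 - p k) =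
        -∑ k, ((1 - q k) / ((K : ℝ) - 1)) * Real.log (1 - q k)) ↔ p = q) := by
  intro p hp0 hp1 hplt
  have hC0 : (0 : ℝ) < (K : ℝ) - 1 := by
    have : (2 : ℝ) ≤ (K : ℝ) := by exact_mod_cast hK
    linarith
  set a : Fin K → ℝ := fun k => 1 - q k with ha
  set b : Fin K → ℝ := fun k => 1 - p k with hb
  have hapos : ∀ k, 0 < a k := fun k => by simp only [ha]; linarith [hqlt k]
  have hbpos : ∀ k, 0 < b k := fun k => by simp only [hb]; linarith [hplt k]
  have hsum : ∑ k, b k = ∑ k, a k := by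
    simp only [ha, hb, Finset.sum_sub_distrib, hq1, hp1]
  obtain ⟨hle, hiff⟩ := gibbs_aux a b hapos hbpos hsum
  have rwp : ∀ r : Fin K → ℝ, ∑ k, ((1 - q k) / ((K : ℝ) - 1)) * Real.log (1 - r k) =
      (∑ k, a k * Real.log (1 - r k)) / ((K : ℝ) - 1) := by
    intro r
    rw [Finset.sum_div]
    exact Finset.sum_congr rfl fun k _ => by rw [div_mul_eq_mul_div]
  have rq : ∑ k, ((1 - q k) / ((K : ℝ) - 1)) * Real.log (1 - q k) =
      (∑ k, a k * Real.log (a k)) / ((K : ℝ) - 1) := rwp q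
  have rp : ∑ k, ((1 - q k) / ((K : ℝ) - 1)) * Real.log (1 - p k) =
      (∑ k, a k * Real.log (b k)) / ((K : ℝ) - 1) := rwp p
  have hba : b = a ↔ p = q := by
    constructor
    · intro h
      funext k
      have := congrFun h k
      simp only [ha, hb] at this
      linarith
    · intro h; funext k; simp only [ha, hb, h]
  constructor
  · rw [rq, rp]
    have := (div_le_div_iff_of_pos_right hC0).mpr hle
    linarith
  · rw [rq, rp, neg_inj]
    constructor
    · intro h
      have h2 : ∑ k, a k * Real.log (b k) = ∑ k, a k * Real.log (a k) := by
        field_simp at h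
        exact h
      exact hba.mp (hiff.mp h2)
    · intro h
      rw [hiff.mpr (hba.mpr h)]
end

section
/- Let K ≥ 2 and let q lie in the probability simplex Δ over {1,…,K} with q_k < 1 for all k, and set q̄_k = (1 − q_k)/(K − 1). The minimum value of the complementary risk L_{q̄} over Δ, attained at p = q, equals −Σ_{k=1}^K q̄_k log(1 − q_k) = H(q̄) − log(K − 1), where H(q̄) = −Σ_{k=1}^K q̄_k log q̄_k is the Shannon entropy of the complementary distribution. -/
open Real

/-- the minimum value of the complementary risk `L_{q̄}` (attained at `p = q`)
equals `-∑ q̄_k log(1 - q_k) = H(q̄) - log(K - 1)`, where `H(q̄) = -∑ q̄_k log q̄_k` is the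
Shannon entropy of the complementary distribution. -/
theorem complementary_risk_min_value {K : ℕ} (hK : 2 ≤ K)
    (q : Fin K → ℝ)
    (hq0 : ∀ k, 0 ≤ q k) (hq1 : ∑ k, q k = 1) (hqlt : ∀ k, q k < 1) :
    (∀ p : Fin K → ℝ, (∀ k, 0 ≤ p k) → ∑ k, p k = 1 → (∀ k, p k < 1) →
      -∑ k, ((1 - q k) / ((K : ℝ) - 1)) * Real.log (1 - q k) ≤
        -∑ k, ((1 - q k) / ((K : ℝ) - 1)) * Real.log (1 - p k)) ∧
    -∑ k, ((1 - q k) / ((K : ℝ) - 1)) * Real.log (1 - q k) =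
      (-∑ k, ((1 - q k) / ((K : ℝ) - 1)) *
          Real.log ((1 - q k) / ((K : ℝ) - 1)))
        - Real.log ((K : ℝ) - 1) := by
  have hK1 : (1 : ℝ) < (K : ℝ) := by exact_mod_cast hK.trans_lt' one_lt_two
  have hKpos : (0 : ℝ) < (K : ℝ) - 1 := by linarith
  have hqk : ∀ k, 0 < 1 - q k := fun k => by linarith [hqlt k]
  have hsumq : ∑ k, (1 - q k) = (K : ℝ) - 1 := by
    rw [Finset.sum_sub_distrib, hq1]
    simp
  have hw : ∑ k, (1 - q k) / ((K : ℝ) - 1) = 1 := by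
    rw [← Finset.sum_div, hsumq, div_self hKpos.ne']
  constructor
  · intro p hp0 hp1 hplt
    have hpk : ∀ k, 0 < 1 - p k := fun k => by linarith [hplt k]
    rw [neg_le_neg_iff]
    have key : ∑ k, ((1 - q k) / ((K : ℝ) - 1)) *
        (Real.log (1 - p k) - Real.log (1 - q k)) ≤ 0 := by
      have hle : ∀ k ∈ Finset.univ, ((1 - q k) / ((K : ℝ) - 1)) *
          (Real.log (1 - p k) - Real.log (1 - q k)) ≤
          ((1 - q k) / ((K : ℝ) - 1)) * ((1 - p k) / (1 - q k) - 1) := by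
        intro k _
        apply mul_le_mul_of_nonneg_left _ (div_nonneg (hqk k).le hKpos.le)
        rw [← Real.log_div (hpk k).ne' (hqk k).ne']
        exact Real.log_le_sub_one_of_pos (div_pos (hpk k) (hqk k))
      calc ∑ k, ((1 - q k) / ((K : ℝ) - 1)) *
            (Real.log (1 - p k) - Real.log (1 - q k))
          ≤ ∑ k, ((1 - q k) / ((K : ℝ) - 1)) * ((1 - p k) / (1 - q k) - 1) :=
            Finset.sum_le_sum hle
        _ = ∑ k, ((1 - p k) / ((K : ℝ) - 1) - (1 - q k) / ((K : ℝ) - 1)) := by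
            apply Finset.sum_congr rfl
            intro k _
            have h1 := (hqk k).ne'
            have h2 := hKpos.ne'
            field_simp
        _ = 0 := by
            rw [Finset.sum_sub_distrib, ← Finset.sum_div, ← Finset.sum_div]
            rw [Finset.sum_sub_distrib, hp1, hsumq]
            simp [div_self hKpos.ne']
    have := key
    simp only [mul_sub, Finset.sum_sub_distrib] at this
    linarith
  · have : ∀ k ∈ Finset.univ, ((1 - q k) / ((K : ℝ) - 1)) *
        Real.log ((1 - q k) / ((K : ℝ) - 1)) =
        ((1 - q k) / ((K : ℝ) - 1)) * Real.log (1 - q k) -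
        ((1 - q k) / ((K : ℝ) - 1)) * Real.log ((K : ℝ) - 1) := by
      intro k _
      rw [Real.log_div (hqk k).ne' hKpos.ne']
      ring
    rw [Finset.sum_congr rfl this, Finset.sum_sub_distrib, ← Finset.sum_mul, hw]
    ring
end

section
/- (Biased/non-uniform complementary labels.) Let K ≥ 2 and let w lie in the probability simplex Δ over {1,…,K} with 0 < w_k ≤ 1/(K − 1) for all k. Define p* ∈ ℝ^K by p*_k = 1 − (K − 1)·w_k. Then p* ∈ Δ, and for every p ∈ Δ with p_k < 1 for all k one has L_w(p) = −Σ_k w_k log(1 − p_k) ≥ L_w(p*), with equality if and only if p = p*. In particular, if w = q̄ is the complementary distribution of a posterior q with q_k < 1 for all k, the unique minimizer is p* = q. -/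
open Real

private lemma aux_term (c wk pk : ℝ) (hc : 0 < c) (hw : 0 < wk) (hp : pk < 1) :
    wk * Real.log (1 - pk) ≤ wk * Real.log (c * wk) + ((1 - pk) / c - wk) ∧
    (pk ≠ 1 - c * wk →
      wk * Real.log (1 - pk) < wk * Real.log (c * wk) + ((1 - pk) / c - wk)) := by
  have hpk : 0 < 1 - pk := by linarith
  have hcw : 0 < c * wk := mul_pos hc hw
  have hx : 0 < (1 - pk) / (c * wk) := div_pos hpk hcw
  have hlog : Real.log ((1 - pk) / (c * wk)) = Real.log (1 - pk) - Real.log (c * wk) :=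
    Real.log_div hpk.ne' hcw.ne'
  have hxval : wk * ((1 - pk) / (c * wk) - 1) = (1 - pk) / c - wk := by
    field_simp
  constructor
  · have h1 : Real.log ((1 - pk) / (c * wk)) ≤ (1 - pk) / (c * wk) - 1 :=
      Real.log_le_sub_one_of_pos hx
    have h2 : wk * Real.log ((1 - pk) / (c * wk)) ≤ wk * ((1 - pk) / (c * wk) - 1) :=
      mul_le_mul_of_nonneg_left h1 hw.le
    rw [hlog, mul_sub, hxval] at h2
    linarith
  · intro hne
    have hne1 : (1 - pk) / (c * wk) ≠ 1 := by
      intro h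
      apply hne
      rw [div_eq_one_iff_eq hcw.ne'] at h
      linarith
    have h1 : Real.log ((1 - pk) / (c * wk)) < (1 - pk) / (c * wk) - 1 :=
      Real.log_lt_sub_one_of_pos hx hne1
    have h2 : wk * Real.log ((1 - pk) / (c * wk)) < wk * ((1 - pk) / (c * wk) - 1) :=
      (mul_lt_mul_iff_right₀ hw).mpr h1
    rw [hlog, mul_sub, hxval] at h2
    linarith

/-- biased/non-uniform complementary labels: for `w` in the simplex with
`0 < w_k ≤ 1/(K-1)` for all `k`, the point `p*_k = 1 - (K-1)·w_k` lies in the simplex and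
uniquely minimizes the complementary risk `L_w` over simplex points with all coordinates
below 1; in particular if `w = q̄` for a posterior `q` with `q_k < 1`, then `p* = q`. -/
theorem biased_complementary_risk_minimizer {K : ℕ} (hK : 2 ≤ K)
    (w : Fin K → ℝ)
    (hw0 : ∀ k, 0 < w k) (hwub : ∀ k, w k ≤ 1 / ((K : ℝ) - 1))
    (hw1 : ∑ k, w k = 1) :
    ((∀ k, 0 ≤ 1 - ((K : ℝ) - 1) * w k) ∧ ∑ k, (1 - ((K : ℝ) - 1) * w k) = 1) ∧
    (∀ p : Fin K → ℝ, (∀ k, 0 ≤ p k) → ∑ k, p k = 1 → (∀ k, p k < 1) →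
      (-∑ k, w k * Real.log (1 - p k) ≥
        -∑ k, w k * Real.log (1 - (1 - ((K : ℝ) - 1) * w k))) ∧
      ((-∑ k, w k * Real.log (1 - p k) =
        -∑ k, w k * Real.log (1 - (1 - ((K : ℝ) - 1) * w k))) ↔
        p = fun k => 1 - ((K : ℝ) - 1) * w k)) ∧
    (∀ q : Fin K → ℝ, (∀ k, q k < 1) →
      (∀ k, w k = (1 - q k) / ((K : ℝ) - 1)) →
      (fun k => 1 - ((K : ℝ) - 1) * w k) = q) := by
  have h2 : (2 : ℝ) ≤ (K : ℝ) := by exact_mod_cast hK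
  have hc0 : (0 : ℝ) < (K : ℝ) - 1 := by linarith
  have hub : ∀ k, ((K : ℝ) - 1) * w k ≤ 1 := by
    intro k
    have h := (le_div_iff₀ hc0).mp (hwub k)
    linarith
  have hsum : ∑ k, (1 - ((K : ℝ) - 1) * w k) = 1 := by
    rw [Finset.sum_sub_distrib, ← Finset.mul_sum, hw1]
    simp [Finset.card_univ]
  refine ⟨⟨fun k => by linarith [hub k], hsum⟩, ?_, ?_⟩
  · intro p hp0 hp1 hplt1
    have hsub : ∀ k, (1 : ℝ) - (1 - ((K : ℝ) - 1) * w k) = ((K : ℝ) - 1) * w k := by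
      intro k; ring
    have hS : ∑ k, ((1 - p k) / ((K : ℝ) - 1) - w k) = 0 := by
      rw [Finset.sum_sub_distrib, ← Finset.sum_div, Finset.sum_sub_distrib, hp1, hw1]
      simp [Finset.card_univ]
      field_simp
      norm_num
    have hle : ∀ k, w k * Real.log (1 - p k) ≤
        w k * Real.log (((K : ℝ) - 1) * w k) + ((1 - p k) / ((K : ℝ) - 1) - w k) :=
      fun k => (aux_term _ _ _ hc0 (hw0 k) (hplt1 k)).1
    have hsumle : ∑ k, w k * Real.log (1 - p k) ≤
        ∑ k, w k * Real.log (((K : ℝ) - 1) * w k) := by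
      calc ∑ k, w k * Real.log (1 - p k)
          ≤ ∑ k, (w k * Real.log (((K : ℝ) - 1) * w k) +
              ((1 - p k) / ((K : ℝ) - 1) - w k)) :=
            Finset.sum_le_sum (fun k _ => hle k)
        _ = ∑ k, w k * Real.log (((K : ℝ) - 1) * w k) +
              ∑ k, ((1 - p k) / ((K : ℝ) - 1) - w k) := Finset.sum_add_distrib
        _ = ∑ k, w k * Real.log (((K : ℝ) - 1) * w k) := by rw [hS]; ring
    constructor
    · simp only [hsub]
      linarith
    · constructor
      · intro heq
        by_contra hne
        obtain ⟨k0, hk0⟩ := Function.ne_iff.mp hne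
        have hlt : ∑ k, w k * Real.log (1 - p k) <
            ∑ k, w k * Real.log (((K : ℝ) - 1) * w k) := by
          calc ∑ k, w k * Real.log (1 - p k)
              < ∑ k, (w k * Real.log (((K : ℝ) - 1) * w k) +
                  ((1 - p k) / ((K : ℝ) - 1) - w k)) := by
                refine Finset.sum_lt_sum (fun k _ => hle k) ⟨k0, Finset.mem_univ _, ?_⟩
                exact (aux_term _ _ _ hc0 (hw0 k0) (hplt1 k0)).2 hk0
            _ = ∑ k, w k * Real.log (((K : ℝ) - 1) * w k) +
                  ∑ k, ((1 - p k) / ((K : ℝ) - 1) - w k) := Finset.sum_add_distrib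
            _ = ∑ k, w k * Real.log (((K : ℝ) - 1) * w k) := by rw [hS]; ring
        simp only [hsub] at heq
        linarith
      · intro hp
        subst hp
        simp only [hsub]
  · intro q hq1 hqw
    funext k
    rw [hqw k]
    field_simp
    ring
end

section
/- (Discrete form of Theorem 1.) Let K ≥ 2, let X be a nonempty finite set of instances, let μ : X → ℝ satisfy μ(x) > 0 and Σ_{x∈X} μ(x) = 1, and for each x let q(x) ∈ Δ be the true posterior with q_k(x) < 1 for all k, with complementary distribution q̄_k(x) = (1 − q_k(x))/(K − 1). For a predictor p : X → Δ with p_k(x) < 1 for all k, x, define the total complementary risk R̄(p) = Σ_{x∈X} μ(x) · (−Σ_{k=1}^K q̄_k(x) log(1 − p_k(x))). Then R̄(p) ≥ R̄(q) for every such predictor p, with equality if and only if p(x) = q(x) for all x ∈ X; consequently the minimizer of the complementary-label risk induces, at every instance x, the same argmax decision as the classifier trained with the true labels (the Bayes classifier x ↦ argmax_k q_k(x)). -/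
open Real

/-- Gibbs-type per-instance lemma. -/
lemma gibbs_instance {K : ℕ} (hK : 2 ≤ K) (q p : Fin K → ℝ)
    (hq1 : ∑ k, q k = 1) (hqlt : ∀ k, q k < 1)
    (hp1 : ∑ k, p k = 1) (hplt : ∀ k, p k < 1) :
    (∑ k, ((1 - q k) / ((K : ℝ) - 1)) * Real.log (1 - p k) ≤
      ∑ k, ((1 - q k) / ((K : ℝ) - 1)) * Real.log (1 - q k)) ∧
    ((∑ k, ((1 - q k) / ((K : ℝ) - 1)) * Real.log (1 - p k) =
      ∑ k, ((1 - q k) / ((K : ℝ) - 1)) * Real.log (1 - q k)) ↔ p = q) := by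
  have hc : (0:ℝ) < (K : ℝ) - 1 := by
    have : (2:ℝ) ≤ (K:ℝ) := by exact_mod_cast hK
    linarith
  set c : ℝ := (K : ℝ) - 1 with hcdef
  have hqpos : ∀ k, 0 < 1 - q k := fun k => by linarith [hqlt k]
  have hppos : ∀ k, 0 < 1 - p k := fun k => by linarith [hplt k]
  have hapos : ∀ k, 0 < (1 - q k) / c := fun k => div_pos (hqpos k) hc
  -- termwise inequality
  have hterm : ∀ k ∈ Finset.univ, ((1 - q k) / c) * Real.log (1 - p k) ≤
      ((1 - q k) / c) * Real.log (1 - q k) + ((1 - p k) / c - (1 - q k) / c) := by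
    intro k _
    have hr : (0:ℝ) < (1 - p k) / (1 - q k) := div_pos (hppos k) (hqpos k)
    have hlog := Real.log_le_sub_one_of_pos hr
    have hlq : Real.log ((1 - p k) / (1 - q k)) =
        Real.log (1 - p k) - Real.log (1 - q k) :=
      Real.log_div (ne_of_gt (hppos k)) (ne_of_gt (hqpos k))
    have h2 : ((1 - q k) / c) * (Real.log (1 - p k) - Real.log (1 - q k)) ≤
        ((1 - q k) / c) * ((1 - p k) / (1 - q k) - 1) := by
      apply mul_le_mul_of_nonneg_left _ (le_of_lt (hapos k))
      rw [← hlq]; exact hlog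
    have h3 : ((1 - q k) / c) * ((1 - p k) / (1 - q k) - 1) =
        (1 - p k) / c - (1 - q k) / c := by
      field_simp [(hqpos k).ne', hc.ne']
    nlinarith [h2, h3]
  -- sum of the slack terms is zero
  have hsump : ∑ k, (1 - p k) / c = 1 := by
    rw [← Finset.sum_div, Finset.sum_sub_distrib, hp1]
    simp [hcdef]
    exact ne_of_gt hc
  have hsumq : ∑ k, (1 - q k) / c = 1 := by
    rw [← Finset.sum_div, Finset.sum_sub_distrib, hq1]
    simp [hcdef]
    exact ne_of_gt hc
  have hsum_rhs : ∑ k, (((1 - q k) / c) * Real.log (1 - q k) +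
      ((1 - p k) / c - (1 - q k) / c)) =
      ∑ k, ((1 - q k) / c) * Real.log (1 - q k) := by
    rw [Finset.sum_add_distrib, Finset.sum_sub_distrib, hsump, hsumq]
    ring
  have hle : ∑ k, ((1 - q k) / c) * Real.log (1 - p k) ≤
      ∑ k, ((1 - q k) / c) * Real.log (1 - q k) := by
    calc ∑ k, ((1 - q k) / c) * Real.log (1 - p k)
        ≤ ∑ k, (((1 - q k) / c) * Real.log (1 - q k) +
            ((1 - p k) / c - (1 - q k) / c)) := Finset.sum_le_sum hterm
      _ = _ := hsum_rhs
  refine ⟨hle, ⟨fun heq => ?_, fun heq => by rw [heq]⟩⟩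
  -- equality case
  have heq2 : ∑ k, ((1 - q k) / c) * Real.log (1 - p k) =
      ∑ k, (((1 - q k) / c) * Real.log (1 - q k) +
      ((1 - p k) / c - (1 - q k) / c)) := by rw [hsum_rhs]; exact heq
  have hall := (Finset.sum_eq_sum_iff_of_le hterm).mp heq2
  funext k
  have hk := hall k (Finset.mem_univ k)
  by_contra hne
  have hr : (0:ℝ) < (1 - p k) / (1 - q k) := div_pos (hppos k) (hqpos k)
  have hrne : (1 - p k) / (1 - q k) ≠ 1 := by
    intro h1
    have := (div_eq_one_iff_eq (ne_of_gt (hqpos k))).mp h1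
    exact hne (by linarith)
  have hstrict := Real.log_lt_sub_one_of_pos hr hrne
  have hlq : Real.log ((1 - p k) / (1 - q k)) =
      Real.log (1 - p k) - Real.log (1 - q k) :=
    Real.log_div (ne_of_gt (hppos k)) (ne_of_gt (hqpos k))
  have h3 : ((1 - q k) / c) * ((1 - p k) / (1 - q k) - 1) =
      (1 - p k) / c - (1 - q k) / c := by
    field_simp [(hqpos k).ne', hc.ne']
  have h2 : ((1 - q k) / c) * (Real.log (1 - p k) - Real.log (1 - q k)) <
      ((1 - q k) / c) * ((1 - p k) / (1 - q k) - 1) := by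
    apply mul_lt_mul_of_pos_left _ (hapos k)
    rw [← hlq]; exact hstrict
  nlinarith [h2, h3, hk]

/-- discrete form of Theorem 1: over a nonempty finite instance space `X`
with instance weights `μ` and true posteriors `q(x)` (all coordinates `< 1`), the total
complementary risk `R̄(p) = ∑_x μ(x) · (-∑_k q̄_k(x) log(1 - p_k(x)))` over admissible
predictors `p` is minimized exactly at `p = q`; and any minimizer induces at every
instance the same argmax decision as the Bayes classifier `x ↦ argmax_k q_k(x)`. -/
theorem discrete_complementary_risk_theorem {K : ℕ} (hK : 2 ≤ K)
    {X : Type*} [Fintype X] [Nonempty X]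
    (μ : X → ℝ) (hμpos : ∀ x, 0 < μ x) (hμ1 : ∑ x, μ x = 1)
    (q : X → Fin K → ℝ)
    (hq0 : ∀ x k, 0 ≤ q x k) (hq1 : ∀ x, ∑ k, q x k = 1)
    (hqlt : ∀ x k, q x k < 1) :
    (∀ p : X → Fin K → ℝ,
      (∀ x k, 0 ≤ p x k) → (∀ x, ∑ k, p x k = 1) → (∀ x k, p x k < 1) →
      (∑ x, μ x * (-∑ k, ((1 - q x k) / ((K : ℝ) - 1)) * Real.log (1 - p x k)) ≥
        ∑ x, μ x * (-∑ k, ((1 - q x k) / ((K : ℝ) - 1)) * Real.log (1 - q x k))) ∧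
      ((∑ x, μ x * (-∑ k, ((1 - q x k) / ((K : ℝ) - 1)) * Real.log (1 - p x k)) =
        ∑ x, μ x * (-∑ k, ((1 - q x k) / ((K : ℝ) - 1)) * Real.log (1 - q x k))) ↔
        ∀ x, p x = q x)) ∧
    (∀ p : X → Fin K → ℝ,
      (∀ x k, 0 ≤ p x k) → (∀ x, ∑ k, p x k = 1) → (∀ x k, p x k < 1) →
      (∀ p' : X → Fin K → ℝ,
        (∀ x k, 0 ≤ p' x k) → (∀ x, ∑ k, p' x k = 1) → (∀ x k, p' x k < 1) →
        ∑ x, μ x * (-∑ k, ((1 - q x k) / ((K : ℝ) - 1)) * Real.log (1 - p x k)) ≤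
          ∑ x, μ x * (-∑ k, ((1 - q x k) / ((K : ℝ) - 1)) * Real.log (1 - p' x k))) →
      ∀ x : X, {k : Fin K | ∀ j, p x j ≤ p x k} = {k : Fin K | ∀ j, q x j ≤ q x k}) := by
  have main : ∀ p : X → Fin K → ℝ,
      (∀ x k, 0 ≤ p x k) → (∀ x, ∑ k, p x k = 1) → (∀ x k, p x k < 1) →
      (∑ x, μ x * (-∑ k, ((1 - q x k) / ((K : ℝ) - 1)) * Real.log (1 - p x k)) ≥
        ∑ x, μ x * (-∑ k, ((1 - q x k) / ((K : ℝ) - 1)) * Real.log (1 - q x k))) ∧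
      ((∑ x, μ x * (-∑ k, ((1 - q x k) / ((K : ℝ) - 1)) * Real.log (1 - p x k)) =
        ∑ x, μ x * (-∑ k, ((1 - q x k) / ((K : ℝ) - 1)) * Real.log (1 - q x k))) ↔
        ∀ x, p x = q x) := by
    intro p hp0 hp1 hplt
    have hterm : ∀ x ∈ Finset.univ,
        μ x * (-∑ k, ((1 - q x k) / ((K : ℝ) - 1)) * Real.log (1 - q x k)) ≤
        μ x * (-∑ k, ((1 - q x k) / ((K : ℝ) - 1)) * Real.log (1 - p x k)) := by
      intro x _
      have := (gibbs_instance hK (q x) (p x) (hq1 x) (hqlt x) (hp1 x) (hplt x)).1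
      have := neg_le_neg this
      exact mul_le_mul_of_nonneg_left this (le_of_lt (hμpos x))
    have hle := Finset.sum_le_sum hterm
    refine ⟨hle, ⟨fun heq => ?_, fun heq => by
      apply Finset.sum_congr rfl; intro x _; rw [heq x]⟩⟩
    have hall := (Finset.sum_eq_sum_iff_of_le hterm).mp heq.symm
    intro x
    have hx := hall x (Finset.mem_univ x)
    have hμne : μ x ≠ 0 := ne_of_gt (hμpos x)
    have heqx : (∑ k, ((1 - q x k) / ((K : ℝ) - 1)) * Real.log (1 - p x k)) =
        (∑ k, ((1 - q x k) / ((K : ℝ) - 1)) * Real.log (1 - q x k)) := by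
      have := mul_left_cancel₀ hμne hx
      linarith [neg_injective this]
    exact (gibbs_instance hK (q x) (p x) (hq1 x) (hqlt x) (hp1 x) (hplt x)).2.mp heqx
  refine ⟨main, ?_⟩
  intro p hp0 hp1 hplt hmin x
  have hle := hmin q hq0 hq1 hqlt
  have hge := (main p hp0 hp1 hplt).1
  have heq : (∑ x, μ x * (-∑ k, ((1 - q x k) / ((K : ℝ) - 1)) * Real.log (1 - p x k)) =
      ∑ x, μ x * (-∑ k, ((1 - q x k) / ((K : ℝ) - 1)) * Real.log (1 - q x k))) :=
    le_antisymm hle hge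
  have hpq := (main p hp0 hp1 hplt).2.mp heq
  rw [hpq x]
end
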